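/- Let F be a field of characteristic zero, V⁺ and V⁻ finite-dimensional F-vector spaces with dim V⁺ = r ≥ 1, and V = V⁺ ⊕ V⁻. Let 𝔰(V⁺,V⁻) be the set of triples (Ã, b̃, c̃) ∈ End(V) × V × V* such that the subspace of V spanned by b̃, Ã(b̃), …, Ã^{r-1}(b̃) equals V⁺ and the subspace {x ∈ V : c̃(Ã^i(x)) = 0 for all 0 ≤ i ≤ r-1} equals V⁻. Define ι((A,b,c),(B,v,w)) = (Z, b, c̄) for (A,b,c) ∈ End(V⁺) × V⁺ × (V⁺)* with d_r(A,b,c) ≠ 0 and (B,v,w) ∈ End(V⁻) × V⁻ × (V⁻)*, where c̄ extends c by zero on V⁻, Z(x,y) = (A(x) + w(y)·b', c'(x)·v + B(y)), and b' ∈ V⁺, c' ∈ (V⁺)* are the unique elements with c(A^i(b')) = δ_{i,r-1} and c'(A^i(b)) = δ_{i,r-1} for 0 ≤ i ≤ r-1. Then: (1) ι is a bijection from {(A,b,c) : d_r(A,b,c) ≠ 0} × (End(V⁻) × V⁻ × (V⁻)*) onto 𝔰(V⁺,V⁻); (2) writing an element (Ã,b̃,c̃) of 𝔰(V⁺,V⁻)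 in block form Ã = (A⁺, L⁺; L⁻, A⁻) relative to V = V⁺ ⊕ V⁻, the inverse of ι sends it to ((A⁺, b̃, c̃|_{V⁺}), (A⁻, L⁻((A⁺)^{r-1}(b̃)), c̃ ∘ (A⁺)^{r-1} ∘ L⁺)); (3) ι is equivariant for GL(V⁺) × GL(V⁻), acting on triples by g·(A,b,c) = (g A g⁻¹, g(b), c ∘ g⁻¹) on each factor and, via block-diagonal inclusion into GL(V), on the target. -/

import Mathlib

/-- The invariant `d_r(A, b, c) = det ((c (A^{i+j} b))_{0 ≤ i,j ≤ r-1})`. -/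
def dLin (F : Type*) [Field F] {V : Type*} [AddCommGroup V] [Module F V]
    (r : ℕ) (A : V →ₗ[F] V) (b : V) (c : V →ₗ[F] F) : F :=
  (Matrix.of fun i j : Fin r => c ((A ^ ((i : ℕ) + (j : ℕ))) b)).det

/-- The map `ι`, sending `((A,b,c), (B,v,w))` (together with the auxiliary vectors
`bp = b'` and form `cp = c'`) to the triple `(Z, (b,0), c̄)` on `V⁺ ⊕ V⁻`, where
`Z (x, y) = (A x + w y • b', c' x • v + B y)` and `c̄` extends `c` by zero on `V⁻`. -/
def iotaMap (F : Type*) [Field F] (Vp Vm : Type*) [AddCommGroup Vp] [Module F Vp]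
    [AddCommGroup Vm] [Module F Vm]
    (bp : Vp) (cp : Vp →ₗ[F] F)
    (A : Vp →ₗ[F] Vp) (b : Vp) (c : Vp →ₗ[F] F)
    (B : Vm →ₗ[F] Vm) (v : Vm) (w : Vm →ₗ[F] F) :
    ((Vp × Vm) →ₗ[F] (Vp × Vm)) × (Vp × Vm) × ((Vp × Vm) →ₗ[F] F) :=
  (LinearMap.prod
      (A ∘ₗ LinearMap.fst F Vp Vm + (w ∘ₗ LinearMap.snd F Vp Vm).smulRight bp)
      ((cp ∘ₗ LinearMap.fst F Vp Vm).smulRight v + B ∘ₗ LinearMap.snd F Vp Vm),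
    (b, 0), c ∘ₗ LinearMap.fst F Vp Vm)

/-- The locally closed set `𝔰(V⁺, V⁻)` of triples `(Ã, b̃, c̃)` such that the span of
`b̃, Ã b̃, …, Ã^{r-1} b̃` is `V⁺ = V⁺ × 0` and
`{x | c̃ (Ã^i x) = 0 for 0 ≤ i ≤ r-1}` is `V⁻ = 0 × V⁻`. -/
def sSet (F : Type*) [Field F] (Vp Vm : Type*) [AddCommGroup Vp] [Module F Vp]
    [AddCommGroup Vm] [Module F Vm] (r : ℕ) :
    Set (((Vp × Vm) →ₗ[F] (Vp × Vm)) × (Vp × Vm) × ((Vp × Vm) →ₗ[F] F)) :=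
  {t | Submodule.span F (Set.range fun i : Fin r => (t.1 ^ (i : ℕ)) t.2.1) =
        LinearMap.range (LinearMap.inl F Vp Vm) ∧
      {x : Vp × Vm | ∀ i < r, t.2.2 ((t.1 ^ i) x) = 0} =
        (LinearMap.range (LinearMap.inr F Vp Vm) : Set (Vp × Vm))}

namespace Stmt5Aux

open LinearMap Submodule
set_option linter.unusedSectionVars false

variable {F : Type*} [Field F] {Vp : Type*} [AddCommGroup Vp] [Module F Vp]
  [FiniteDimensional F Vp] {r : ℕ} {A : Vp →ₗ[F] Vp} {b : Vp} {c : Vp →ₗ[F] F}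

def hMat (r : ℕ) (A : Vp →ₗ[F] Vp) (b : Vp) (c : Vp →ₗ[F] F) : Matrix (Fin r) (Fin r) F :=
  Matrix.of fun i j : Fin r => c ((A ^ ((i : ℕ) + (j : ℕ))) b)

lemma pow_pow (i j : ℕ) (x : Vp) : (A ^ i) ((A ^ j) x) = (A ^ (i + j)) x := by
  rw [pow_add]; rfl

lemma mulVec_inj (hd : dLin F r A b c ≠ 0) {g : Fin r → F}
    (hg : (hMat r A b c).mulVec g = 0) : g = 0 := by
  by_contra h
  exact hd (Matrix.exists_mulVec_eq_zero_iff.mp ⟨g, h, hg⟩)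

lemma li_pows (hd : dLin F r A b c ≠ 0) :
    LinearIndependent F (fun i : Fin r => (A ^ (i : ℕ)) b) := by
  rw [Fintype.linearIndependent_iff]
  intro g hg
  have key : (hMat r A b c).mulVec g = 0 := by
    funext i
    have h2 := congrArg (fun z => c ((A ^ (i : ℕ)) z)) hg
    simp only [map_sum, map_smul, smul_eq_mul, map_zero] at h2
    simp only [Matrix.mulVec, dotProduct, hMat, Matrix.of_apply, Pi.zero_apply]
    rw [← h2]
    exact Finset.sum_congr rfl fun j _ => by rw [pow_pow, mul_comm]
  intro i; exact congrFun (mulVec_inj hd key) i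

noncomputable def kbasis (hdim : Module.finrank F Vp = r) (hr : 1 ≤ r)
    (hd : dLin F r A b c ≠ 0) : Module.Basis (Fin r) F Vp :=
  haveI : Nonempty (Fin r) := ⟨⟨0, hr⟩⟩
  basisOfLinearIndependentOfCardEqFinrank (li_pows hd) (by simp [hdim])

lemma kbasis_coe (hdim : Module.finrank F Vp = r) (hr : 1 ≤ r) (hd : dLin F r A b c ≠ 0) :
    ⇑(kbasis hdim hr hd) = fun i : Fin r => (A ^ (i : ℕ)) b := by
  haveI : Nonempty (Fin r) := ⟨⟨0, hr⟩⟩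
  exact coe_basisOfLinearIndependentOfCardEqFinrank _ _

lemma span_pows (hdim : Module.finrank F Vp = r) (hr : 1 ≤ r) (hd : dLin F r A b c ≠ 0) :
    Submodule.span F (Set.range fun i : Fin r => (A ^ (i : ℕ)) b) = ⊤ := by
  rw [← kbasis_coe hdim hr hd]
  exact (kbasis hdim hr hd).span_eq

lemma forms_inj (hdim : Module.finrank F Vp = r) (hr : 1 ≤ r) (hd : dLin F r A b c ≠ 0)
    {x : Vp} (hx : ∀ i < r, c ((A ^ i) x) = 0) : x = 0 := by
  set B := kbasis hdim hr hd with hB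
  have hrepr : ∀ j : Fin r, B.repr x j = 0 := by
    have key : (hMat r A b c).mulVec (B.repr x) = 0 := by
      funext i
      have hxsum : x = ∑ j : Fin r, B.repr x j • (A ^ (j : ℕ)) b := by
        conv_lhs => rw [← B.sum_repr x]
        exact Finset.sum_congr rfl fun j _ => by rw [hB, kbasis_coe hdim hr hd]
      have h2 := hx i i.2
      rw [hxsum] at h2
      simp only [map_sum, map_smul, smul_eq_mul] at h2
      simp only [Matrix.mulVec, dotProduct, hMat, Matrix.of_apply, Pi.zero_apply]
      rw [← h2]
      exact Finset.sum_congr rfl fun j _ => by rw [pow_pow, mul_comm]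
    exact fun j => congrFun (mulVec_inj hd key) j
  have := B.sum_repr x
  rw [← this]
  simp [hrepr]

lemma unique_vec (hdim : Module.finrank F Vp = r) (hr : 1 ≤ r) (hd : dLin F r A b c ≠ 0)
    {b1 b2 : Vp} (h : ∀ i < r, c ((A ^ i) b1) = c ((A ^ i) b2)) : b1 = b2 := by
  have : b1 - b2 = 0 := forms_inj hdim hr hd fun i hi => by
    simp [map_sub, h i hi]
  exact sub_eq_zero.mp this

lemma unique_form (hdim : Module.finrank F Vp = r) (hr : 1 ≤ r) (hd : dLin F r A b c ≠ 0)
    {c1 c2 : Vp →ₗ[F] F} (h : ∀ i < r, c1 ((A ^ i) b) = c2 ((A ^ i) b)) : c1 = c2 := by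
  apply (kbasis hdim hr hd).ext
  intro i
  rw [kbasis_coe hdim hr hd]
  exact h i i.2

-- part2 variables
variable {F : Type*} [Field F] {Vp : Type*} [AddCommGroup Vp] [Module F Vp]
  [FiniteDimensional F Vp] {r : ℕ} {A : Vp →ₗ[F] Vp} {b : Vp} {c : Vp →ₗ[F] F}
  {Vm : Type*} [AddCommGroup Vm] [Module F Vm]
  {Bm : Vm →ₗ[F] Vm} {v : Vm} {w : Vm →ₗ[F] F} {bp : Vp} {cp : Vp →ₗ[F] F}

lemma iota_fst_apply (x : Vp) (y : Vm) :
    (iotaMap F Vp Vm bp cp A b c Bm v w).1 (x, y) = (A x + w y • bp, cp x • v + Bm y) := rfl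

lemma Zpow_b (hcp : ∀ i < r, cp ((A ^ i) b) = if i = r - 1 then 1 else 0) :
    ∀ i < r, (((iotaMap F Vp Vm bp cp A b c Bm v w).1 ^ i)) (b, 0) = ((A ^ i) b, 0) := by
  intro i
  induction i with
  | zero => intro _; simp
  | succ n ih =>
    intro h
    have hn : n < r := Nat.lt_of_succ_lt h
    rw [pow_succ', Module.End.mul_apply, ih hn, iota_fst_apply]
    have h1 : cp ((A ^ n) b) = 0 := by
      rw [hcp n hn, if_neg (by omega)]
    rw [h1, map_zero]
    simp [pow_succ', Module.End.mul_apply]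

lemma cbar_pow (hbp : ∀ i < r, c ((A ^ i) bp) = if i = r - 1 then 1 else 0) :
    ∀ i < r, ∀ (x : Vp) (y : Vm),
      (iotaMap F Vp Vm bp cp A b c Bm v w).2.2
        (((iotaMap F Vp Vm bp cp A b c Bm v w).1 ^ i) (x, y)) = c ((A ^ i) x) := by
  intro i
  induction i with
  | zero => intro _ x y; simp [iotaMap]
  | succ n ih =>
    intro h x y
    have hn : n < r := Nat.lt_of_succ_lt h
    rw [pow_succ, Module.End.mul_apply, iota_fst_apply, ih hn]
    have h1 : c ((A ^ n) bp) = 0 := by rw [hbp n hn, if_neg (by omega)]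
    simp [map_add, map_smul, h1, pow_succ, Module.End.mul_apply]

lemma iota_mem_sSet (hdim : Module.finrank F Vp = r) (hr : 1 ≤ r)
    (hd : dLin F r A b c ≠ 0)
    (hbp : ∀ i < r, c ((A ^ i) bp) = if i = r - 1 then 1 else 0)
    (hcp : ∀ i < r, cp ((A ^ i) b) = if i = r - 1 then 1 else 0) :
    iotaMap F Vp Vm bp cp A b c Bm v w ∈ sSet F Vp Vm r := by
  constructor
  · have h1 : (fun i : Fin r => (((iotaMap F Vp Vm bp cp A b c Bm v w).1 ^ (i : ℕ))) (b, 0))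
        = fun i : Fin r => LinearMap.inl F Vp Vm ((A ^ (i : ℕ)) b) := by
      funext i
      rw [Zpow_b hcp i i.2]
      rfl
    show Submodule.span F _ = _
    have hb0 : (iotaMap F Vp Vm bp cp A b c Bm v w).2.1 = (b, 0) := rfl
    rw [hb0, h1]
    have h2 : (Set.range fun i : Fin r => LinearMap.inl F Vp Vm ((A ^ (i : ℕ)) b))
        = LinearMap.inl F Vp Vm '' (Set.range fun i : Fin r => (A ^ (i : ℕ)) b) := by
      rw [← Set.range_comp]; rfl
    rw [h2, Submodule.span_image, span_pows hdim hr hd, Submodule.map_top]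
  · ext x
    constructor
    · intro hx
      have hx1 : x.1 = 0 := by
        apply forms_inj hdim hr hd
        intro i hi
        have := hx i hi
        rwa [show x = (x.1, x.2) from rfl, cbar_pow hbp i hi x.1 x.2] at this
      refine ⟨x.2, ?_⟩
      have h9 : (LinearMap.inr F Vp Vm) x.2 = ((0 : Vp), x.2) := rfl
      rw [h9, ← hx1]
    · rintro ⟨y, rfl⟩ i hi
      rw [show (LinearMap.inr F Vp Vm) y = ((0 : Vp), y) from rfl, cbar_pow hbp i hi]
      simp

lemma iota_plus_eq {A2 : Vp →ₗ[F] Vp} {b2 : Vp} {c2 : Vp →ₗ[F] F} {Bm2 : Vm →ₗ[F] Vm}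
    {v2 : Vm} {w2 : Vm →ₗ[F] F} {bp2 : Vp} {cp2 : Vp →ₗ[F] F}
    (h : iotaMap F Vp Vm bp cp A b c Bm v w = iotaMap F Vp Vm bp2 cp2 A2 b2 c2 Bm2 v2 w2) :
    A = A2 ∧ b = b2 ∧ c = c2 := by
  have h1 := congrArg Prod.fst h
  have h2 := congrArg (fun z : ((Vp × Vm) →ₗ[F] (Vp × Vm)) × (Vp × Vm) × ((Vp × Vm) →ₗ[F] F) => z.2.1) h
  have h3 := congrArg (fun z : ((Vp × Vm) →ₗ[F] (Vp × Vm)) × (Vp × Vm) × ((Vp × Vm) →ₗ[F] F) => z.2.2) h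
  refine ⟨?_, congrArg Prod.fst h2, ?_⟩
  · ext x
    have h4 := congrArg (fun Z : (Vp × Vm) →ₗ[F] (Vp × Vm) => (Z (x, (0 : Vm))).1) h1
    simpa [iotaMap] using h4
  · ext x
    have h4 := congrArg (fun f : (Vp × Vm) →ₗ[F] F => f (x, (0 : Vm))) h3
    simpa [iotaMap] using h4

lemma iota_minus_eq {Bm2 : Vm →ₗ[F] Vm} {v2 : Vm} {w2 : Vm →ₗ[F] F}
    (hbpne : bp ≠ 0) (hcpb : cp ((A ^ (r - 1)) b) = 1)
    (h : iotaMap F Vp Vm bp cp A b c Bm v w = iotaMap F Vp Vm bp cp A b c Bm2 v2 w2) :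
    Bm = Bm2 ∧ v = v2 ∧ w = w2 := by
  have h1 := congrArg Prod.fst h
  refine ⟨?_, ?_, ?_⟩
  · ext y
    have h4 := congrArg (fun Z : (Vp × Vm) →ₗ[F] (Vp × Vm) => (Z ((0 : Vp), y)).2) h1
    simpa [iotaMap] using h4
  · have h4 := congrArg (fun Z : (Vp × Vm) →ₗ[F] (Vp × Vm) => (Z (((A ^ (r - 1)) b), (0 : Vm))).2) h1
    simpa [iotaMap, hcpb] using h4
  · ext y
    have h4 := congrArg (fun Z : (Vp × Vm) →ₗ[F] (Vp × Vm) => (Z ((0 : Vp), y)).1) h1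
    simp only [iotaMap, LinearMap.prod_apply, Function.prod, LinearMap.add_apply,
      LinearMap.comp_apply, LinearMap.fst_apply, LinearMap.snd_apply,
      LinearMap.smulRight_apply, map_zero, zero_add] at h4
    exact smul_left_injective F hbpne h4

lemma conj_pow (g : Vp ≃ₗ[F] Vp) (A : Vp →ₗ[F] Vp) (i : ℕ) (x : Vp) :
    ((g.toLinearMap ∘ₗ A ∘ₗ g.symm.toLinearMap) ^ i) x = g ((A ^ i) (g.symm x)) := by
  induction i with
  | zero => simp
  | succ n ih =>
    rw [pow_succ', Module.End.mul_apply, ih]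
    simp [pow_succ', Module.End.mul_apply]

lemma dLin_conj (g : Vp ≃ₗ[F] Vp) :
    dLin F r (g.toLinearMap ∘ₗ A ∘ₗ g.symm.toLinearMap) (g b) (c ∘ₗ g.symm.toLinearMap)
      = dLin F r A b c := by
  unfold dLin
  have hm : (Matrix.of fun i j : Fin r =>
      (c ∘ₗ g.symm.toLinearMap)
        (((g.toLinearMap ∘ₗ A ∘ₗ g.symm.toLinearMap) ^ ((i : ℕ) + (j : ℕ))) (g b)))
      = Matrix.of fun i j : Fin r => c ((A ^ ((i : ℕ) + (j : ℕ))) b) := by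
    ext i j
    simp [conj_pow]
  rw [hm]

end Stmt5Aux

/-- `ι` is a `GL(V⁺) × GL(V⁻)`-equivariant bijection from
`{(A,b,c) : d_r(A,b,c) ≠ 0} × (End(V⁻) × V⁻ × (V⁻)*)` onto `𝔰(V⁺,V⁻)`, whose inverse is
given on block matrices by
`(Ã,b̃,c̃) ↦ ((A⁺, b̃, c̃|_{V⁺}), (A⁻, L⁻((A⁺)^{r-1} b̃), c̃ ∘ (A⁺)^{r-1} ∘ L⁺))`. -/
theorem stmt_5 (F : Type*) [Field F] [CharZero F]
    (Vp Vm : Type*) [AddCommGroup Vp] [Module F Vp] [FiniteDimensional F Vp]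
    [AddCommGroup Vm] [Module F Vm] [FiniteDimensional F Vm]
    (r : ℕ) (hr : 1 ≤ r) (hdim : Module.finrank F Vp = r)
    (b'f : (Vp →ₗ[F] Vp) → Vp → (Vp →ₗ[F] F) → Vp)
    (c'f : (Vp →ₗ[F] Vp) → Vp → (Vp →ₗ[F] F) → (Vp →ₗ[F] F))
    (hb' : ∀ (A : Vp →ₗ[F] Vp) (b : Vp) (c : Vp →ₗ[F] F), dLin F r A b c ≠ 0 →
      ∀ i < r, c ((A ^ i) (b'f A b c)) = if i = r - 1 then 1 else 0)
    (hc' : ∀ (A : Vp →ₗ[F] Vp) (b : Vp) (c : Vp →ₗ[F] F), dLin F r A b c ≠ 0 →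
      ∀ i < r, (c'f A b c) ((A ^ i) b) = if i = r - 1 then 1 else 0) :
    -- (1) `ι` is a bijection from the locus `d_r ≠ 0` onto `𝔰(V⁺,V⁻)`
    Set.BijOn
      (fun p : ((Vp →ₗ[F] Vp) × Vp × (Vp →ₗ[F] F)) × ((Vm →ₗ[F] Vm) × Vm × (Vm →ₗ[F] F)) =>
        iotaMap F Vp Vm (b'f p.1.1 p.1.2.1 p.1.2.2) (c'f p.1.1 p.1.2.1 p.1.2.2)
          p.1.1 p.1.2.1 p.1.2.2 p.2.1 p.2.2.1 p.2.2.2)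
      {p | dLin F r p.1.1 p.1.2.1 p.1.2.2 ≠ 0}
      (sSet F Vp Vm r) ∧
    -- (2) the formula for the inverse of `ι`
    (∀ t ∈ sSet F Vp Vm r,
      let Ap : Vp →ₗ[F] Vp := LinearMap.fst F Vp Vm ∘ₗ t.1 ∘ₗ LinearMap.inl F Vp Vm
      let Lm : Vp →ₗ[F] Vm := LinearMap.snd F Vp Vm ∘ₗ t.1 ∘ₗ LinearMap.inl F Vp Vm
      let Lp : Vm →ₗ[F] Vp := LinearMap.fst F Vp Vm ∘ₗ t.1 ∘ₗ LinearMap.inr F Vp Vm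
      let Am : Vm →ₗ[F] Vm := LinearMap.snd F Vp Vm ∘ₗ t.1 ∘ₗ LinearMap.inr F Vp Vm
      let cres : Vp →ₗ[F] F := t.2.2 ∘ₗ LinearMap.inl F Vp Vm
      dLin F r Ap t.2.1.1 cres ≠ 0 ∧
        iotaMap F Vp Vm (b'f Ap t.2.1.1 cres) (c'f Ap t.2.1.1 cres)
          Ap t.2.1.1 cres Am (Lm ((Ap ^ (r - 1)) t.2.1.1))
          (cres ∘ₗ (Ap ^ (r - 1)) ∘ₗ Lp) = t) ∧
    -- (3) `GL(V⁺) × GL(V⁻)`-equivariance of `ι`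
    (∀ (gp : Vp ≃ₗ[F] Vp) (gm : Vm ≃ₗ[F] Vm)
      (A : Vp →ₗ[F] Vp) (b : Vp) (c : Vp →ₗ[F] F)
      (B : Vm →ₗ[F] Vm) (v : Vm) (w : Vm →ₗ[F] F), dLin F r A b c ≠ 0 →
      iotaMap F Vp Vm
          (b'f (gp.toLinearMap ∘ₗ A ∘ₗ gp.symm.toLinearMap) (gp b) (c ∘ₗ gp.symm.toLinearMap))
          (c'f (gp.toLinearMap ∘ₗ A ∘ₗ gp.symm.toLinearMap) (gp b) (c ∘ₗ gp.symm.toLinearMap))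
          (gp.toLinearMap ∘ₗ A ∘ₗ gp.symm.toLinearMap) (gp b) (c ∘ₗ gp.symm.toLinearMap)
          (gm.toLinearMap ∘ₗ B ∘ₗ gm.symm.toLinearMap) (gm v) (w ∘ₗ gm.symm.toLinearMap) =
        ((gp.toLinearMap.prodMap gm.toLinearMap) ∘ₗ
            (iotaMap F Vp Vm (b'f A b c) (c'f A b c) A b c B v w).1 ∘ₗ
            (gp.symm.toLinearMap.prodMap gm.symm.toLinearMap),
          (gp.toLinearMap.prodMap gm.toLinearMap)
            ((iotaMap F Vp Vm (b'f A b c) (c'f A b c) A b c B v w).2.1),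
          (iotaMap F Vp Vm (b'f A b c) (c'f A b c) A b c B v w).2.2 ∘ₗ
            (gp.symm.toLinearMap.prodMap gm.symm.toLinearMap))) := by
  classical
  open Stmt5Aux in
  -- the inverse computation, used both in part (2) and for surjectivity
  have inv : ∀ t ∈ sSet F Vp Vm r,
      dLin F r (LinearMap.fst F Vp Vm ∘ₗ t.1 ∘ₗ LinearMap.inl F Vp Vm) t.2.1.1
        (t.2.2 ∘ₗ LinearMap.inl F Vp Vm) ≠ 0 ∧
      iotaMap F Vp Vm
        (b'f (LinearMap.fst F Vp Vm ∘ₗ t.1 ∘ₗ LinearMap.inl F Vp Vm) t.2.1.1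
          (t.2.2 ∘ₗ LinearMap.inl F Vp Vm))
        (c'f (LinearMap.fst F Vp Vm ∘ₗ t.1 ∘ₗ LinearMap.inl F Vp Vm) t.2.1.1
          (t.2.2 ∘ₗ LinearMap.inl F Vp Vm))
        (LinearMap.fst F Vp Vm ∘ₗ t.1 ∘ₗ LinearMap.inl F Vp Vm) t.2.1.1
        (t.2.2 ∘ₗ LinearMap.inl F Vp Vm)
        (LinearMap.snd F Vp Vm ∘ₗ t.1 ∘ₗ LinearMap.inr F Vp Vm)
        ((LinearMap.snd F Vp Vm ∘ₗ t.1 ∘ₗ LinearMap.inl F Vp Vm)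
          (((LinearMap.fst F Vp Vm ∘ₗ t.1 ∘ₗ LinearMap.inl F Vp Vm) ^ (r - 1)) t.2.1.1))
        ((t.2.2 ∘ₗ LinearMap.inl F Vp Vm) ∘ₗ
          ((LinearMap.fst F Vp Vm ∘ₗ t.1 ∘ₗ LinearMap.inl F Vp Vm) ^ (r - 1)) ∘ₗ
          (LinearMap.fst F Vp Vm ∘ₗ t.1 ∘ₗ LinearMap.inr F Vp Vm)) = t := by
    intro t ht
    obtain ⟨hspan, hker⟩ := ht
    set At : (Vp × Vm) →ₗ[F] (Vp × Vm) := t.1 with hAtdef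
    set bt : Vp × Vm := t.2.1 with hbtdef
    set ct : (Vp × Vm) →ₗ[F] F := t.2.2 with hctdef
    set Ap : Vp →ₗ[F] Vp := LinearMap.fst F Vp Vm ∘ₗ At ∘ₗ LinearMap.inl F Vp Vm with hApdef
    set Lm : Vp →ₗ[F] Vm := LinearMap.snd F Vp Vm ∘ₗ At ∘ₗ LinearMap.inl F Vp Vm with hLmdef
    set Lp : Vm →ₗ[F] Vp := LinearMap.fst F Vp Vm ∘ₗ At ∘ₗ LinearMap.inr F Vp Vm with hLpdef
    set Am : Vm →ₗ[F] Vm := LinearMap.snd F Vp Vm ∘ₗ At ∘ₗ LinearMap.inr F Vp Vm with hAmdef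
    set cres : Vp →ₗ[F] F := ct ∘ₗ LinearMap.inl F Vp Vm with hcresdef
    have hinl : ∀ x : Vp, At (x, 0) = (Ap x, Lm x) := fun x => rfl
    have hinr : ∀ y : Vm, At (0, y) = (Lp y, Am y) := fun y => rfl
    have hbt : bt = (bt.1, 0) := by
      have hmem : bt ∈ LinearMap.range (LinearMap.inl F Vp Vm) := by
        rw [← hspan]
        exact Submodule.subset_span ⟨⟨0, hr⟩, by simp⟩
      obtain ⟨x, hx⟩ := hmem
      rw [← hx]; rfl
    have tpow : ∀ i < r, (At ^ i) bt = ((Ap ^ i) bt.1, 0) := by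
      intro i
      induction i with
      | zero => intro _; simpa using hbt
      | succ n ih =>
        intro h
        have hn := Nat.lt_of_succ_lt h
        have hmem : (At ^ (n + 1)) bt ∈ LinearMap.range (LinearMap.inl F Vp Vm) := by
          rw [← hspan]
          exact Submodule.subset_span ⟨⟨n + 1, h⟩, rfl⟩
        obtain ⟨z, hz⟩ := hmem
        have h1 : (At ^ (n + 1)) bt = (Ap ((Ap ^ n) bt.1), Lm ((Ap ^ n) bt.1)) := by
          rw [pow_succ', Module.End.mul_apply, ih hn, hinl]
        have h2 : Lm ((Ap ^ n) bt.1) = 0 := by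
          have h3 := congrArg Prod.snd (hz.trans h1)
          simpa using h3.symm
        rw [h1, h2, pow_succ', Module.End.mul_apply]
    have hLm0 : ∀ n, n + 1 < r → Lm ((Ap ^ n) bt.1) = 0 := by
      intro n hn
      have h1 : (At ^ (n + 1)) bt = (Ap ((Ap ^ n) bt.1), Lm ((Ap ^ n) bt.1)) := by
        rw [pow_succ', Module.End.mul_apply, tpow n (Nat.lt_of_succ_lt hn), hinl]
      have h2 := (tpow (n + 1) hn).symm.trans h1
      exact (congrArg Prod.snd h2).symm
    have hker0 : ∀ y : Vm, ∀ i < r, ct ((At ^ i) (0, y)) = 0 := by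
      intro y
      have hmem : ((0 : Vp), y) ∈ {x : Vp × Vm | ∀ i < r, ct ((At ^ i) x) = 0} := by
        rw [hker]; exact ⟨y, rfl⟩
      exact hmem
    have tform : ∀ i < r, ∀ x : Vp, ct ((At ^ i) (x, 0)) = cres ((Ap ^ i) x) := by
      intro i
      induction i with
      | zero =>
        intro _ x
        simp only [pow_zero, Module.End.one_apply]
        rfl
      | succ n ih =>
        intro h x
        have hn := Nat.lt_of_succ_lt h
        have hsplit : ((Ap x, Lm x) : Vp × Vm) = (Ap x, 0) + (0, Lm x) := by simp
        rw [pow_succ, Module.End.mul_apply, hinl, hsplit, map_add, map_add, ih hn,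
          hker0 (Lm x) n hn, add_zero, pow_succ, Module.End.mul_apply]
    have tform_full : ∀ i < r, ∀ p : Vp × Vm, ct ((At ^ i) p) = cres ((Ap ^ i) p.1) := by
      intro i hi p
      have hsplit : p = (p.1, 0) + (0, p.2) := by simp
      calc ct ((At ^ i) p) = ct ((At ^ i) ((p.1, 0) + (0, p.2))) := by rw [← hsplit]
        _ = cres ((Ap ^ i) p.1) := by
            rw [map_add, map_add, tform i hi, hker0 p.2 i hi, add_zero]
    have cres_inj : ∀ x : Vp, (∀ i < r, cres ((Ap ^ i) x) = 0) → x = 0 := by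
      intro x hx
      have hmem : ((x, 0) : Vp × Vm) ∈ {p : Vp × Vm | ∀ i < r, ct ((At ^ i) p) = 0} := by
        intro i hi
        rw [tform i hi]
        exact hx i hi
      rw [hker] at hmem
      obtain ⟨y, hy⟩ := hmem
      exact (congrArg Prod.fst hy).symm
    have hfam : (fun i : Fin r => (At ^ (i : ℕ)) bt)
        = fun i : Fin r => LinearMap.inl F Vp Vm ((Ap ^ (i : ℕ)) bt.1) :=
      funext fun i => by rw [tpow _ i.2]; rfl
    have hspan' : Submodule.span F
        (Set.range fun i : Fin r => LinearMap.inl F Vp Vm ((Ap ^ (i : ℕ)) bt.1))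
        = LinearMap.range (LinearMap.inl F Vp Vm) := by
      rw [← hfam]; exact hspan
    have span_Ap : Submodule.span F (Set.range fun i : Fin r => (Ap ^ (i : ℕ)) bt.1) = ⊤ := by
      rw [Submodule.eq_top_iff']
      intro x
      have hx : LinearMap.inl F Vp Vm x ∈ Submodule.span F
          (Set.range fun i : Fin r => LinearMap.inl F Vp Vm ((Ap ^ (i : ℕ)) bt.1)) := by
        rw [hspan']; exact ⟨x, rfl⟩
      have himg : (Set.range fun i : Fin r => LinearMap.inl F Vp Vm ((Ap ^ (i : ℕ)) bt.1))
          = LinearMap.inl F Vp Vm '' (Set.range fun i : Fin r => (Ap ^ (i : ℕ)) bt.1) := by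
        rw [← Set.range_comp]; rfl
      rw [himg, Submodule.span_image, Submodule.mem_map] at hx
      obtain ⟨z, hz, hzx⟩ := hx
      have hzx' : z = x := congrArg Prod.fst hzx
      rwa [← hzx']
    haveI : Nonempty (Fin r) := ⟨⟨0, hr⟩⟩
    have hcard : Fintype.card (Fin r) = Module.finrank F Vp := by simp [hdim]
    set Abasis : Module.Basis (Fin r) F Vp :=
      basisOfTopLeSpanOfCardEqFinrank (fun i : Fin r => (Ap ^ (i : ℕ)) bt.1) span_Ap.ge hcard
      with hAbasisdef
    have Abasis_coe : ⇑Abasis = fun i : Fin r => (Ap ^ (i : ℕ)) bt.1 :=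
      coe_basisOfTopLeSpanOfCardEqFinrank _ _ _
    have hd' : dLin F r Ap bt.1 cres ≠ 0 := by
      intro h0
      obtain ⟨g, gne, hg⟩ := Matrix.exists_mulVec_eq_zero_iff.mpr
        (show (Matrix.of fun i j : Fin r =>
          cres ((Ap ^ ((i : ℕ) + (j : ℕ))) bt.1)).det = 0 from h0)
      have hu : (∑ j : Fin r, g j • (Ap ^ (j : ℕ)) bt.1) = 0 := by
        apply cres_inj
        intro i hi
        have h2 := congrFun hg ⟨i, hi⟩
        simp only [Matrix.mulVec, dotProduct, Matrix.of_apply, Pi.zero_apply] at h2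
        simp only [map_sum, map_smul, smul_eq_mul]
        rw [← h2]
        exact Finset.sum_congr rfl fun j _ => by rw [Stmt5Aux.pow_pow, mul_comm]
      have hli := Abasis.linearIndependent
      rw [Fintype.linearIndependent_iff] at hli
      exact gne (funext (hli g (by simp only [Abasis_coe]; exact hu)))
    refine ⟨hd', ?_⟩
    have hLp : ∀ y : Vm, Lp y = cres ((Ap ^ (r - 1)) (Lp y)) • b'f Ap bt.1 cres := by
      intro y
      have hLp0 : ∀ i, i + 1 < r → cres ((Ap ^ i) (Lp y)) = 0 := by
        intro i hi
        have h1 := hker0 y (i + 1) hi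
        rw [pow_succ, Module.End.mul_apply, hinr] at h1
        rwa [tform_full i (Nat.lt_of_succ_lt hi) (Lp y, Am y)] at h1
      apply Stmt5Aux.unique_vec hdim hr hd'
      intro i hi
      have hrhs : cres ((Ap ^ i) (cres ((Ap ^ (r - 1)) (Lp y)) • b'f Ap bt.1 cres))
          = cres ((Ap ^ (r - 1)) (Lp y)) * (if i = r - 1 then 1 else 0) := by
        rw [map_smul, map_smul, smul_eq_mul, hb' Ap bt.1 cres hd' i hi]
      rw [hrhs]
      rcases Nat.lt_or_ge i (r - 1) with hlt | hge
      · rw [if_neg (by omega), mul_zero, hLp0 i (by omega)]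
      · have hieq : i = r - 1 := by omega
        rw [hieq, if_pos rfl, mul_one]
    have hLmEq : Lm = (c'f Ap bt.1 cres).smulRight (Lm ((Ap ^ (r - 1)) bt.1)) := by
      apply Abasis.ext
      intro i
      rw [show Abasis i = (Ap ^ (i : ℕ)) bt.1 from congrFun Abasis_coe i]
      rw [LinearMap.smulRight_apply, hc' Ap bt.1 cres hd' (i : ℕ) i.2]
      rcases Nat.lt_or_ge (i : ℕ) (r - 1) with hlt | hge
      · rw [if_neg (by omega), zero_smul, hLm0 (i : ℕ) (by omega)]
      · have hieq : (i : ℕ) = r - 1 := by omega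
        rw [hieq, if_pos rfl, one_smul]
    refine Prod.ext ?_ (Prod.ext ?_ ?_)
    · apply LinearMap.ext
      rintro ⟨x, y⟩
      have hAt : At (x, y) = (Ap x + Lp y, Lm x + Am y) := by
        have hsp : ((x, y) : Vp × Vm) = (x, 0) + (0, y) := by simp
        rw [hsp, map_add, hinl, hinr]
        rfl
      rw [Stmt5Aux.iota_fst_apply]
      show (Ap x + (cres ∘ₗ (Ap ^ (r - 1)) ∘ₗ Lp) y • b'f Ap bt.1 cres,
        (c'f Ap bt.1 cres) x • Lm ((Ap ^ (r - 1)) bt.1) + Am y) = At (x, y)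
      rw [hAt]
      refine Prod.ext ?_ ?_
      · show Ap x + cres ((Ap ^ (r - 1)) (Lp y)) • b'f Ap bt.1 cres = Ap x + Lp y
        rw [← hLp y]
      · show (c'f Ap bt.1 cres) x • Lm ((Ap ^ (r - 1)) bt.1) + Am y = Lm x + Am y
        rw [LinearMap.congr_fun hLmEq x]
        rfl
    · exact hbt.symm
    · apply LinearMap.ext
      rintro ⟨x, y⟩
      show cres x = ct (x, y)
      have h0 := tform_full 0 hr (x, y)
      simpa using h0.symm
  refine ⟨⟨?_, ?_, ?_⟩, ?_, ?_⟩
  · -- MapsTo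
    intro p hp
    exact Stmt5Aux.iota_mem_sSet hdim hr hp (hb' _ _ _ hp) (hc' _ _ _ hp)
  · -- InjOn
    intro p1 h1 p2 h2 heq
    simp only [Set.mem_setOf_eq] at h1 h2
    dsimp only at heq
    obtain ⟨hA, hb, hc⟩ := Stmt5Aux.iota_plus_eq heq
    rw [hA, hb, hc] at heq
    have hbpne : b'f p2.1.1 p2.1.2.1 p2.1.2.2 ≠ 0 := by
      intro h0
      have h3 := hb' p2.1.1 p2.1.2.1 p2.1.2.2 h2 (r - 1) (by omega)
      rw [if_pos rfl, h0] at h3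
      simp at h3
    have hcpb : (c'f p2.1.1 p2.1.2.1 p2.1.2.2) ((p2.1.1 ^ (r - 1)) p2.1.2.1) = 1 := by
      have h3 := hc' p2.1.1 p2.1.2.1 p2.1.2.2 h2 (r - 1) (by omega)
      rwa [if_pos rfl] at h3
    obtain ⟨hB, hv, hw⟩ := Stmt5Aux.iota_minus_eq hbpne hcpb heq
    exact Prod.ext (Prod.ext hA (Prod.ext hb hc)) (Prod.ext hB (Prod.ext hv hw))
  · -- SurjOn
    intro t ht
    exact ⟨((LinearMap.fst F Vp Vm ∘ₗ t.1 ∘ₗ LinearMap.inl F Vp Vm, t.2.1.1,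
        t.2.2 ∘ₗ LinearMap.inl F Vp Vm),
      (LinearMap.snd F Vp Vm ∘ₗ t.1 ∘ₗ LinearMap.inr F Vp Vm,
        (LinearMap.snd F Vp Vm ∘ₗ t.1 ∘ₗ LinearMap.inl F Vp Vm)
          (((LinearMap.fst F Vp Vm ∘ₗ t.1 ∘ₗ LinearMap.inl F Vp Vm) ^ (r - 1)) t.2.1.1),
        (t.2.2 ∘ₗ LinearMap.inl F Vp Vm) ∘ₗ
          ((LinearMap.fst F Vp Vm ∘ₗ t.1 ∘ₗ LinearMap.inl F Vp Vm) ^ (r - 1)) ∘ₗ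
          (LinearMap.fst F Vp Vm ∘ₗ t.1 ∘ₗ LinearMap.inr F Vp Vm))),
      (inv t ht).1, (inv t ht).2⟩
  · -- inverse formula
    intro t ht
    intro Ap Lm Lp Am cres
    exact inv t ht
  · -- equivariance
    intro gp gm A b c B v w hd
    have hd2 : dLin F r (gp.toLinearMap ∘ₗ A ∘ₗ gp.symm.toLinearMap) (gp b)
        (c ∘ₗ gp.symm.toLinearMap) ≠ 0 := by
      rw [Stmt5Aux.dLin_conj]; exact hd
    have hbp_conj : b'f (gp.toLinearMap ∘ₗ A ∘ₗ gp.symm.toLinearMap) (gp b)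
        (c ∘ₗ gp.symm.toLinearMap) = gp (b'f A b c) := by
      apply Stmt5Aux.unique_vec hdim hr hd2
      intro i hi
      rw [hb' _ _ _ hd2 i hi]
      rw [Stmt5Aux.conj_pow]
      simp only [LinearMap.comp_apply, LinearEquiv.coe_coe, LinearEquiv.symm_apply_apply]
      rw [hb' A b c hd i hi]
    have hcp_conj : c'f (gp.toLinearMap ∘ₗ A ∘ₗ gp.symm.toLinearMap) (gp b)
        (c ∘ₗ gp.symm.toLinearMap) = (c'f A b c) ∘ₗ gp.symm.toLinearMap := by
      apply Stmt5Aux.unique_form hdim hr hd2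
      intro i hi
      rw [hc' _ _ _ hd2 i hi]
      rw [Stmt5Aux.conj_pow]
      simp only [LinearMap.comp_apply, LinearEquiv.coe_coe, LinearEquiv.symm_apply_apply]
      rw [hc' A b c hd i hi]
    rw [hbp_conj, hcp_conj]
    refine Prod.ext ?_ (Prod.ext ?_ ?_)
    · apply LinearMap.ext
      rintro ⟨x, y⟩
      show ((gp.toLinearMap ∘ₗ A ∘ₗ gp.symm.toLinearMap) x
            + (w ∘ₗ gm.symm.toLinearMap) y • gp (b'f A b c),
          ((c'f A b c) ∘ₗ gp.symm.toLinearMap) x • gm v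
            + (gm.toLinearMap ∘ₗ B ∘ₗ gm.symm.toLinearMap) y) = _
      simp [iotaMap, map_add, map_smul]
    · show ((gp b, (0 : Vm)) : Vp × Vm) = _
      simp [iotaMap]
    · apply LinearMap.ext
      rintro ⟨x, y⟩
      show (c ∘ₗ gp.symm.toLinearMap) x = _
      simp [iotaMap]
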